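/- Call a weak composition a quasiflat if its nonzero entries occupy a set of consecutive positions. If a weak composition a of length n is not quasiflat, then for every value of β the glide polynomial 𝒢_a^{(β)} is not quasisymmetric in x_1,...,x_n. -/
import Mathlib


open scoped Classical
open MvPolynomial Finset

namespace GlidePaper


/-! ## Weak compositions, kompositions, glides -/

/-- Extend a length-`n` weak composition to a function on `ℕ` (zero outside). -/
def extVal {n : ℕ} (v : Fin n → ℕ) (t : ℕ) : ℕ := if h : t < n then v ⟨t, h⟩ else 0

/-- Extend a coloring to a function on `ℕ` (black outside). -/
def extRed {n : ℕ} (r : Fin n → Bool) (t : ℕ) : Bool := if h : t < n then r ⟨t, h⟩ else false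

/-- The flattening of a weak composition: the list of its nonzero entries, in order. -/
def flattenW {n : ℕ} (a : Fin n → ℕ) : List ℕ := ((List.finRange n).map a).filter (· ≠ 0)

/-- The (0-indexed) positions of the nonzero entries of `a`, in increasing order. -/
def nzPos {n : ℕ} (a : Fin n → ℕ) : List ℕ :=
  ((List.finRange n).filter (fun i => a i ≠ 0)).map Fin.val

/-- The excess of a weak komposition, i.e. its number of red entries. -/
def redCount {n : ℕ} (r : Fin n → Bool) : ℕ :=
  (Finset.univ.filter (fun i => r i = true)).card

/-- The weak komposition with values `v` and red set `r` is a glide of the weak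
composition `a` (all of length `n`).  Blocks are delimited by
`0 = e 0 < e 1 < ⋯ < e ℓ ≤ n` where `ℓ` is the number of nonzero entries of `a`;
the `j`-th block consists of the (1-indexed) entries `e j + 1, …, e (j+1)`,
i.e. the 0-indexed positions `e j, …, e (j+1) - 1`, entries beyond position `e ℓ`
vanish, and:
(i) the sum of each block is the corresponding entry of `flat a` plus the number of
red entries of the block; (ii) the block ends weakly left of the position of the
corresponding nonzero entry of `a`; (iii) the first entry of each block is not red.
Red entries are required to be positive. -/
def IsGlide {n : ℕ} (a : Fin n → ℕ) (v : Fin n → ℕ) (r : Fin n → Bool) : Prop :=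
  (∀ i, r i = true → 0 < v i) ∧
  ∃ e : ℕ → ℕ, e 0 = 0 ∧ e (flattenW a).length ≤ n ∧
    (∀ t, e (flattenW a).length ≤ t → extVal v t = 0) ∧
    (∀ j, j < (flattenW a).length → e j < e (j + 1)) ∧
    (∀ j, j < (flattenW a).length →
      ((∑ t ∈ Finset.Ico (e j) (e (j + 1)), extVal v t)
          = (flattenW a).getD j 0
            + ((Finset.Ico (e j) (e (j + 1))).filter (fun t => extRed r t = true)).card)
      ∧ e (j + 1) ≤ (nzPos a).getD j 0 + 1
      ∧ extRed r (e j) = false)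

/-- The glide polynomial `𝒢_a^{(β)}` in variables `x_1, …, x_n`, with coefficient
ring `R` and parameter `β : R`: the sum of `β^{ex(b)} x^b` over all glides `b` of `a`.
(Every glide of `a` has all entries at most `(∑ i, a i) + n`, so the sum below
ranges over a sufficiently large finite set.) -/
noncomputable def glidePoly {n : ℕ} {R : Type*} [CommRing R] (β : R) (a : Fin n → ℕ) :
    MvPolynomial (Fin n) R :=
  ∑ p : (Fin n → Fin ((∑ i, a i) + n + 1)) × (Fin n → Bool),
    if IsGlide a (fun i => (p.1 i : ℕ)) p.2 then
      monomial (Finsupp.equivFunOnFinite.symm fun i => ((p.1 i : ℕ))) (β ^ redCount p.2)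
    else 0




/-! ## Pipe dreams -/

/-- The state of a pipe while being traced through a pipe dream: either inside the
tile in row `r`, column `c` (0-indexed from the top-left), having entered from the
west (`fromWest = true`) or from the south (`fromWest = false`), or already exited
through the top edge at column `c`. -/
inductive PipeState : Type
  | inside (r c : ℕ) (fromWest : Bool)
  | exited (c : ℕ)
deriving DecidableEq

/-- One step of tracing a pipe through the pipe dream with crossing set `D`:
at a crossing tile the pipe goes straight; at an elbow tile a pipe entering from the
west exits north and a pipe entering from the south exits east. -/
def pipeStep (D : Finset (ℕ × ℕ)) : PipeState → PipeState
  | .exited c => .exited c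
  | .inside r c fromW =>
    let cross : Bool := decide ((r, c) ∈ D)
    if fromW ≠ cross then
      -- exits through the north edge of the tile
      if r = 0 then .exited c else .inside (r - 1) c false
    else .inside r (c + 1) true

/-- The pipe labeled `p` (0-indexed) enters the quadrant at row `p` from the west. -/
def startState (p : ℕ) : PipeState := .inside p 0 true

/-- Pipe `p` passes through tile `(r, c)` entering from the west (`fromW = true`)
or from the south (`fromW = false`). -/
def Passes (D : Finset (ℕ × ℕ)) (p r c : ℕ) (fromW : Bool) : Prop :=
  ∃ k, (pipeStep D)^[k] (startState p) = .inside r c fromW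

/-- Pipe `p` exits the quadrant through the top edge at column `c` (0-indexed). -/
def ExitsAt (D : Finset (ℕ × ℕ)) (p c : ℕ) : Prop :=
  ∃ k, (pipeStep D)^[k] (startState p) = .exited c

/-- The tile `x` is a crossing of `D` whose west-entering pipe is `p` and whose
south-entering pipe is `q`. -/
def CrossPair (D : Finset (ℕ × ℕ)) (x : ℕ × ℕ) (p q : ℕ) : Prop :=
  x ∈ D ∧ Passes D p x.1 x.2 true ∧ Passes D q x.1 x.2 false

/-- The reduction of a pipe dream: keep, among the crossings between each pair of
pipes, only the southwestmost one. -/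
noncomputable def reduct (D : Finset (ℕ × ℕ)) : Finset (ℕ × ℕ) :=
  D.filter (fun x => ∀ y ∈ D, ∀ p q : ℕ,
    CrossPair D x p q → (CrossPair D y p q ∨ CrossPair D y q p) → (y.1 ≤ x.1 ∧ x.2 ≤ y.2))

/-- `D` is a pipe dream for the permutation `w` (of `ℕ`, 0-indexed): in the reduction
of `D`, the pipe entering at row `p` exits at column `w p`, for every `p`. -/
def HasPerm (D : Finset (ℕ × ℕ)) (w : Equiv.Perm ℕ) : Prop :=
  ∀ p, ExitsAt (reduct D) p (w p)

/-- The excess of a pipe dream: its number of crossings minus that of its reduction. -/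
noncomputable def pdExcess (D : Finset (ℕ × ℕ)) : ℕ := D.card - (reduct D).card

/-- The number of crossings in (0-indexed) row `i` of `D`. -/
def wtRow (D : Finset (ℕ × ℕ)) (i : ℕ) : ℕ := (D.filter (fun x => x.1 = i)).card

/-- A pipe dream is quasi-Yamanouchi if the westmost crossing of every nonempty row
either lies in the westmost column or lies weakly west of some crossing in the row
below it. -/
def QuasiYamPD (D : Finset (ℕ × ℕ)) : Prop :=
  ∀ r c, (r, c) ∈ D → (∀ c' < c, (r, c') ∉ D) →
    (c = 0 ∨ ∃ c'', (r + 1, c'') ∈ D ∧ c ≤ c'')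

/-- One destandardization move, applied to row `r`: if row `r` is nonempty, has no
crossing in the first column, and all its crossings are strictly east of all the
crossings of row `r + 1`, shift every crossing of row `r` one step southwest
(crossings landing on existing crossings merge). -/
def DstStep (D : Finset (ℕ × ℕ)) (r : ℕ) (D' : Finset (ℕ × ℕ)) : Prop :=
  (∃ c, (r, c) ∈ D) ∧ (r, 0) ∉ D ∧
  (∀ c c', (r, c) ∈ D → (r + 1, c') ∈ D → c' < c) ∧
  D' = D.filter (fun x => x.1 ≠ r) ∪
        (D.filter (fun x => x.1 = r)).image (fun x => (r + 1, x.2 - 1))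

/-- `D'` is obtained from `D` by a (possibly empty) sequence of destandardization moves. -/
def DstReaches (D D' : Finset (ℕ × ℕ)) : Prop :=
  Relation.ReflTransGen (fun E E' => ∃ r, DstStep E r E') D D'

/-- No destandardization move applies to `D`. -/
def DstNormal (D : Finset (ℕ × ℕ)) : Prop := ∀ r D', ¬ DstStep D r D'

/-- The `β`-Grothendieck polynomial of `w`, written in the variables `x_1, …, x_n`:
the sum of `β^{ex(P)} x^{wt(P)}` over all pipe dreams `P` for `w`.  (All crossings
of any pipe dream for a permutation `w` with `w i = i` for `i ≥ m` lie in rows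
`< m` and columns `< m`, so for `n, M ≥ m` the finite sum below, over pipe dreams
contained in the box with `n` rows and `M` columns, is the full sum.) -/
noncomputable def grothPoly {R : Type*} [CommRing R] (β : R) (n M : ℕ) (w : Equiv.Perm ℕ) :
    MvPolynomial (Fin n) R :=
  ∑ D ∈ (Finset.range n ×ˢ Finset.range M).powerset.filter (fun D => HasPerm D w),
    monomial (Finsupp.equivFunOnFinite.symm fun i : Fin n => wtRow D i.1) (β ^ pdExcess D)




/-! ## Slide polynomials, refinement, dominance -/


/-- `b` dominates `a`: every initial partial sum of `b` is at least that of `a`. -/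
def Dominates {n : ℕ} (b a : Fin n → ℕ) : Prop :=
  ∀ k : ℕ, ∑ i ∈ Finset.univ.filter (fun i : Fin n => (i : ℕ) < k), a i
    ≤ ∑ i ∈ Finset.univ.filter (fun i : Fin n => (i : ℕ) < k), b i

/-- The (strong) composition `L` refines the composition `M` if `M` is obtained by
summing consecutive entries of `L`. -/
def ListRefines (L M : List ℕ) : Prop :=
  ∃ P : List (List ℕ), ([] ∉ P) ∧ P.flatten = L ∧ P.map List.sum = M

/-- The fundamental slide polynomial `𝔉_a`: the sum of `x^b` over weak compositions
`b` of length `n` which dominate `a` and with `flat b` refining `flat a`. -/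
noncomputable def slidePoly {n : ℕ} (a : Fin n → ℕ) : MvPolynomial (Fin n) ℤ :=
  ∑ p : Fin n → Fin ((∑ i, a i) + 1),
    if Dominates (fun i => (p i : ℕ)) a ∧
        ListRefines (flattenW (fun i => (p i : ℕ))) (flattenW a) then
      monomial (Finsupp.equivFunOnFinite.symm fun i => ((p i : ℕ))) 1
    else 0

/-- The fundamental quasisymmetric polynomial `F_a(x_1, …, x_n)` of a strong
composition `a`: the sum of `x^b` over weak compositions `b` of length `n` with
`flat b` refining `a`. -/
noncomputable def fundQS {R : Type*} [CommRing R] (n : ℕ) (a : List ℕ) :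
    MvPolynomial (Fin n) R :=
  ∑ p : Fin n → Fin (a.sum + 1),
    if ListRefines (flattenW (fun i => ((p i : ℕ)))) a then
      monomial (Finsupp.equivFunOnFinite.symm fun i => ((p i : ℕ))) 1
    else 0

/-- The weak composition of length `n` obtained from a list `L` (of length `≤ n`)
by prepending `n - L.length` zeros. -/
def padLeft (n : ℕ) (L : List ℕ) : Fin n → ℕ := fun i =>
  if n - L.length ≤ (i : ℕ) then L.getD ((i : ℕ) - (n - L.length)) 0 else 0

/-- A polynomial in `x_1, …, x_n` is quasisymmetric if, for every sequence of
positive exponents `e_1, …, e_k` and every pair of strictly increasing sequences of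
variable indices, the coefficients of the corresponding monomials agree. -/
def IsQuasiSym {R : Type*} [CommRing R] {n : ℕ} (f : MvPolynomial (Fin n) R) : Prop :=
  ∀ (k : ℕ) (e : Fin k → ℕ), (∀ t, 0 < e t) →
    ∀ g h : Fin k → Fin n, StrictMono g → StrictMono h →
      MvPolynomial.coeff
          (Finsupp.equivFunOnFinite.symm fun i => ∑ t, if g t = i then e t else 0) f
        = MvPolynomial.coeff
            (Finsupp.equivFunOnFinite.symm fun i => ∑ t, if h t = i then e t else 0) f




/-! ## Set-valued tableaux -/

/-- `f` (giving, for each box `(i, j)` with `i < n`, `j < B`, a set of entries,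
where the element `k : Fin n` stands for the value `k + 1 ∈ {1, …, n}`) is a
set-valued tableau of shape `lam`: boxes of the diagram are nonempty, boxes outside
are empty, rows weakly increase (max of a box ≤ min of the box to its right) and
columns strictly increase. -/
def IsSVT (n B : ℕ) (lam : ℕ → ℕ) (f : Fin n → Fin B → Finset (Fin n)) : Prop :=
  (∀ (i : Fin n) (j : Fin B), (j : ℕ) < lam (i : ℕ) → (f i j).Nonempty) ∧
  (∀ (i : Fin n) (j : Fin B), lam (i : ℕ) ≤ (j : ℕ) → f i j = ∅) ∧
  (∀ (i : Fin n) (j j' : Fin B), (j : ℕ) + 1 = (j' : ℕ) → (j' : ℕ) < lam (i : ℕ) →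
    ∀ x ∈ f i j, ∀ y ∈ f i j', x ≤ y) ∧
  (∀ (i i' : Fin n) (j : Fin B), (i : ℕ) + 1 = (i' : ℕ) → (j : ℕ) < lam (i' : ℕ) →
    ∀ x ∈ f i j, ∀ y ∈ f i' j, (x : ℕ) < (y : ℕ))

/-- A set-valued tableau is quasi-Yamanouchi if for every value `k + 1 > 1` occurring
in it, some instance of `k + 1` lies weakly left of some instance of `k` in a
different box. -/
def SVTQY {n B : ℕ} (f : Fin n → Fin B → Finset (Fin n)) : Prop :=
  ∀ k : Fin n, 0 < (k : ℕ) → (∃ i j, k ∈ f i j) →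
    ∃ (i : Fin n) (j : Fin B) (i' : Fin n) (j' : Fin B) (k' : Fin n),
      (k' : ℕ) + 1 = (k : ℕ) ∧ k ∈ f i j ∧ k' ∈ f i' j' ∧
      (j : ℕ) ≤ (j' : ℕ) ∧ (i, j) ≠ (i', j')

/-- The weight of a set-valued tableau: its `k`-th entry is the number of boxes
containing the value `k + 1`. -/
def svtWt {n B : ℕ} (f : Fin n → Fin B → Finset (Fin n)) : Fin n → ℕ :=
  fun k => ∑ i : Fin n, ∑ j : Fin B, if k ∈ f i j then 1 else 0

/-- The total number of entries of a set-valued tableau. -/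
def svtSize {n B : ℕ} (f : Fin n → Fin B → Finset (Fin n)) : ℕ :=
  ∑ i : Fin n, ∑ j : Fin B, (f i j).card

/-- The Lehmer code of a permutation of `ℕ` (0-indexed). -/
noncomputable def lehmer (w : Equiv.Perm ℕ) (i : ℕ) : ℕ :=
  Set.ncard {j | i < j ∧ w j < w i}

/-- The number of inversions of a permutation of `ℕ`. -/
noncomputable def invNum (w : Equiv.Perm ℕ) : ℕ :=
  Set.ncard {p : ℕ × ℕ | p.1 < p.2 ∧ w p.2 < w p.1}

/-- The Knutson–Miller–Yong map `φ` from set-valued tableaux (entries in `{1,…,n}`,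
shape with at most `n` rows, boxes indexed by `Fin n × Fin B`) to pipe dreams:
a value `k + 1` in the (0-indexed) box `(i, j)` becomes a crossing in row
`n - 1 - k` and column `j + k - i`.  (This is the upside-down placement over the
bottom pipe dream `P_{L(w)}` followed by moving each label `i + r - n - 1` steps
northeast.) -/
def phiKMY (n B : ℕ) (f : Fin n → Fin B → Finset (Fin n)) : Finset (ℕ × ℕ) :=
  ((Finset.univ : Finset (Fin n × Fin B × Fin n)).filter
      (fun t => t.2.2 ∈ f t.1 t.2.1)).image
    (fun t => (n - 1 - (t.2.2 : ℕ), (t.2.1 : ℕ) + (t.2.2 : ℕ) - (t.1 : ℕ)))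





/-! ## Multi-fundamental quasisymmetric functions -/

/-- Between the `i`-th and `(i+1)`-st sets (0-indexed) of a chain for the strong
composition `a`, the strict inequality is imposed exactly when `i + 1` is a partial
sum `a_1 + ⋯ + a_k` of `a`. -/
def ChainStrictAt (a : List ℕ) (i : ℕ) : Prop := ∃ k, 0 < k ∧ (a.take k).sum = i + 1

/-- `σ = (S_1, …, S_{|a|})` is a chain in `Ã_a`: a sequence of `a.sum` nonempty
finite sets of positive integers with `max S_i < min S_{i+1}` when `i` is a partial
sum of `a`, and `max S_i ≤ min S_{i+1}` otherwise. -/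
def IsMultiChain (a : List ℕ) (σ : List (Finset ℕ)) : Prop :=
  σ.length = a.sum ∧ (∀ S ∈ σ, S.Nonempty) ∧ (∀ S ∈ σ, ∀ x ∈ S, 1 ≤ x) ∧
  ∀ i, i + 1 < σ.length →
    ((ChainStrictAt a i → ∀ x ∈ σ.getD i ∅, ∀ y ∈ σ.getD (i + 1) ∅, x < y) ∧
     (¬ ChainStrictAt a i → ∀ x ∈ σ.getD i ∅, ∀ y ∈ σ.getD (i + 1) ∅, x ≤ y))

/-- The number of occurrences of the value `x` among the sets of the chain `σ`. -/
def chainWt (σ : List (Finset ℕ)) (x : ℕ) : ℕ := (σ.filter (fun S => x ∈ S)).length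

/-- The weak composition of length `m + n` obtained by prepending `m` zeros to `a`. -/
def prependZeros {n : ℕ} (m : ℕ) (a : Fin n → ℕ) : Fin (m + n) → ℕ := fun i =>
  if h : (i : ℕ) < m then 0 else a ⟨(i : ℕ) - m, by have := i.isLt; omega⟩

/-! ## Unsplit glides, quasiflatness -/


/-- A weak composition is quasiflat if its nonzero entries occupy consecutive
positions. -/
def Quasiflat {n : ℕ} (a : Fin n → ℕ) : Prop :=
  ∀ i j k : Fin n, i ≤ j → j ≤ k → a i ≠ 0 → a k ≠ 0 → a j ≠ 0

/-- The number of zero entries of `a` that precede some nonzero entry. -/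
def zBefore {n : ℕ} (a : Fin n → ℕ) : ℕ :=
  (Finset.univ.filter (fun i : Fin n => a i = 0 ∧ ∃ j, i < j ∧ a j ≠ 0)).card




/-! ## The genomic shuffle product and the glide product -/

/-- `C` is a shuffle (interleaving) of the words `A` and `B`. -/
inductive IsShuffle {α : Type*} : List α → List α → List α → Prop
  | nil : IsShuffle [] [] []
  | left {A B C : List α} {a : α} : IsShuffle A B C → IsShuffle (a :: A) B (a :: C)
  | right {A B C : List α} {b : α} : IsShuffle A B C → IsShuffle A (b :: B) (b :: C)

/-- `A^gen`: replace the `j`-th occurrence (from the left) of each letter `i` of `A`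
by the superscripted symbol `(i, j)`. -/
def toGen (A : List ℕ) : List (ℕ × ℕ) :=
  (List.range A.length).map (fun i => (A.getD i 0, (A.take i).count (A.getD i 0) + 1))

/-- The lexicographic order on superscripted symbols: `i^j < k^l` iff `i < k`, or
`i = k` and `j < l`. -/
def ltSym (x y : ℕ × ℕ) : Prop := x.1 < y.1 ∨ (x.1 = y.1 ∧ x.2 < y.2)

/-- `C` lies in the genomic shuffle product `A ⧢_gen B`: superscripts of equal
letters weakly increase from left to right, no two consecutive symbols of `C` are
equal, and every subword of `C` containing each symbol of `C` exactly once is a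
shuffle of `A^gen` and `B^gen`. -/
def InGenShuffle (A B : List ℕ) (C : List (ℕ × ℕ)) : Prop :=
  (∀ p q : ℕ, p < q → ∀ (hp : p < C.length) (hq : q < C.length),
    (C.get ⟨p, hp⟩).1 = (C.get ⟨q, hq⟩).1 → (C.get ⟨p, hp⟩).2 ≤ (C.get ⟨q, hq⟩).2) ∧
  List.Chain' (· ≠ ·) C ∧
  (∀ C' : List (ℕ × ℕ), C'.Sublist C → (∀ s ∈ C, C'.count s = 1) →
    IsShuffle (toGen A) (toGen B) C')

/-- `R` is the decomposition of the word `C` into its maximal strictly increasing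
runs. -/
def IsRunDecomp (C : List (ℕ × ℕ)) (R : List (List (ℕ × ℕ))) : Prop :=
  R.flatten = C ∧ (∀ r ∈ R, r ≠ []) ∧ (∀ r ∈ R, r.Chain' ltSym) ∧
  R.Chain' (fun r s => ∀ x y, x ∈ r.getLast? → y ∈ s.head? → ¬ ltSym x y)

/-- `G` is a genotype of the sequence of words `R`: it is obtained by deleting, from
the words of `R`, all but one occurrence of each symbol occurring in `R`, and then
erasing all superscripts. -/
def IsGenotypeSeq (R : List (List (ℕ × ℕ))) (G : List (List ℕ)) : Prop :=
  ∃ R' : List (List (ℕ × ℕ)), R'.length = R.length ∧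
    (∀ i, (R'.getD i []).Sublist (R.getD i [])) ∧
    (∀ s ∈ R.flatten, (R'.flatten).count s = 1) ∧
    G = R'.map (List.map Prod.fst)

/-- `Comp_𝔅(G)` for the letter set `𝔅 = {x | P x}`: the list whose `i`-th entry is
the number of letters of `𝔅` in the `i`-th word of `G`. -/
def compOf (P : ℕ → Bool) (G : List (List ℕ)) : List ℕ :=
  G.map (fun wrd => (wrd.filter (fun x => P x)).length)

/-- The list `L` dominates the weak composition `a`: every initial partial sum of
`L` is at least the corresponding one of `a`. -/
def DomGe {n : ℕ} (L : List ℕ) (a : Fin n → ℕ) : Prop :=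
  ∀ k : ℕ, (∑ i ∈ Finset.univ.filter (fun i : Fin n => (i : ℕ) < k), a i) ≤ (L.take k).sum

/-- The word `A = (2n-1)^{a_1} (2n-3)^{a_2} ⋯ (1)^{a_n}` on the odd letters. -/
def wordA {n : ℕ} (a : Fin n → ℕ) : List ℕ :=
  (((List.finRange n).map (fun i => List.replicate (a i) (2 * (n - (i : ℕ)) - 1)))).flatten

/-- The word `B = (2n)^{b_1} (2n-2)^{b_2} ⋯ (2)^{b_n}` on the even letters. -/
def wordB {n : ℕ} (b : Fin n → ℕ) : List ℕ :=
  (((List.finRange n).map (fun i => List.replicate (b i) (2 * (n - (i : ℕ)))))).flatten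

/-- `C` lies in the genomic shuffle set `GSS(a, b)`: it lies in the genomic shuffle
product of the associated words and every genotype `G` of `Runs(C)` satisfies
`Comp_odd(G) ≥ a` and `Comp_even(G) ≥ b` in dominance order. -/
def InGSS {n : ℕ} (a b : Fin n → ℕ) (C : List (ℕ × ℕ)) : Prop :=
  InGenShuffle (wordA a) (wordB b) C ∧
  ∀ R G, IsRunDecomp C R → IsGenotypeSeq R G →
    DomGe (compOf (fun x => x % 2 == 1) G) a ∧ DomGe (compOf (fun x => x % 2 == 0) G) b

/-- `S` is a valid insertion of empty words into `Runs(C)`, of total length `n`,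
such that every genotype of `S` still satisfies the dominance conditions. -/
def BumpValid {n : ℕ} (a b : Fin n → ℕ) (C : List (ℕ × ℕ))
    (S : List (List (ℕ × ℕ))) : Prop :=
  S.length = n ∧ (∃ R, IsRunDecomp C R ∧ S.filter (fun r => r ≠ []) = R) ∧
  ∀ G, IsGenotypeSeq S G →
    DomGe (compOf (fun x => x % 2 == 1) G) a ∧ DomGe (compOf (fun x => x % 2 == 0) G) b

/-- `S = BumpRuns(C)`: `S` is the dominance-minimal valid insertion of empty words
into `Runs(C)`. -/
def IsBumpRuns {n : ℕ} (a b : Fin n → ℕ) (C : List (ℕ × ℕ))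
    (S : List (List (ℕ × ℕ))) : Prop :=
  BumpValid a b C S ∧ ∀ S', BumpValid a b C S' →
    ∀ k, ((S.take k).map List.length).sum ≤ ((S'.take k).map List.length).sum

/-- The multiplicity `g_{a,b}^c` of the weak composition `c` in the glide product
`a ⧢_gen b`: the number of words `C ∈ GSS(a, b)` with `Comp(BumpRuns(C)) = c`. -/
noncomputable def glideMult {n : ℕ} (a b c : Fin n → ℕ) : ℕ :=
  Set.ncard {C : List (ℕ × ℕ) | InGSS a b C ∧
    ∃ S, IsBumpRuns a b C S ∧ (fun i : Fin n => (S.getD (i : ℕ) []).length) = c}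



/-- The quasisymmetric glide polynomial `G_a^{(β)}(x_1, …, x_n)` of a strong
composition `a` with `ℓ(a) ≤ n`: the glide polynomial of the weak composition
`0^{n - ℓ(a)} a`. -/
noncomputable def qsGlide {R : Type*} [CommRing R] (β : R) (n : ℕ) (a : List ℕ) :
    MvPolynomial (Fin n) R :=
  glidePoly β (padLeft n a)

/-- A glide `(v, r)` of `a` is unsplit if its number of nonzero black entries
equals the number of nonzero entries of `a`, and no zero entry lies to the right of
a nonzero entry. -/
def IsUnsplitGlide {n : ℕ} (a : Fin n → ℕ) (v : Fin n → ℕ) (r : Fin n → Bool) : Prop :=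
  IsGlide a v r ∧
  (Finset.univ.filter (fun i => v i ≠ 0 ∧ r i = false)).card
      = (Finset.univ.filter (fun i => a i ≠ 0)).card ∧
  (∀ i j : Fin n, i < j → v i ≠ 0 → v j ≠ 0)



/-! ### Auxiliary lemmas for Statement 13 -/

lemma list_sum_getD (M : List ℕ) : ∑ j ∈ Finset.range M.length, M.getD j 0 = M.sum := by
  induction M with
  | nil => simp
  | cons x M ih =>
    rw [List.length_cons, Finset.sum_range_succ', List.sum_cons, ← ih]
    simp [Nat.add_comm, List.getD]

lemma filter_sum_ne (M : List ℕ) : (M.filter (· ≠ 0)).sum = M.sum := by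
  induction M with
  | nil => simp
  | cons x M ih =>
    simp only [ne_eq, decide_not] at ih ⊢
    by_cases hx : x = 0 <;> simp [List.filter_cons, hx, ih]

lemma flattenW_eq {n : ℕ} (a : Fin n → ℕ) :
    flattenW a = ((List.finRange n).filter (fun i => a i ≠ 0)).map a := by
  rw [flattenW, List.filter_map]
  rfl

lemma flattenW_sum {n : ℕ} (a : Fin n → ℕ) : (flattenW a).sum = ∑ i, a i := by
  rw [flattenW, filter_sum_ne, Fin.sum_univ_def]

lemma extVal_coe {n : ℕ} (v : Fin n → ℕ) (i : Fin n) : extVal v i = v i := by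
  unfold extVal; rw [dif_pos i.isLt]

lemma extRed_coe {n : ℕ} (r : Fin n → Bool) (i : Fin n) : extRed r i = r i := by
  unfold extRed; rw [dif_pos i.isLt]

lemma prefix_sum {n : ℕ} (a v : Fin n → ℕ) (r : Fin n → Bool) (e : ℕ → ℕ)
    (he0 : e 0 = 0)
    (hmono : ∀ j, j < (flattenW a).length → e j < e (j + 1))
    (hblocks : ∀ j, j < (flattenW a).length →
      (∑ t ∈ Finset.Ico (e j) (e (j + 1)), extVal v t)
          = (flattenW a).getD j 0
            + ((Finset.Ico (e j) (e (j + 1))).filter (fun t => extRed r t = true)).card) :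
    ∀ J, J ≤ (flattenW a).length →
      (∑ t ∈ Finset.Ico 0 (e J), extVal v t)
        = (∑ j ∈ Finset.range J, (flattenW a).getD j 0)
          + ((Finset.Ico 0 (e J)).filter (fun t => extRed r t = true)).card := by
  intro J
  induction J with
  | zero => simp [he0]
  | succ J ih =>
    intro hJ1
    have hJ : J < (flattenW a).length := hJ1
    have h1 : e J ≤ e (J + 1) := le_of_lt (hmono J hJ)
    have h0 : (0:ℕ) ≤ e J := Nat.zero_le _
    have hsplit := Finset.sum_Ico_consecutive (fun t => extVal v t) h0 h1
    have hb := hblocks J hJ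
    have hih := ih (le_of_lt hJ)
    have hcard : ((Finset.Ico 0 (e (J+1))).filter (fun t => extRed r t = true)).card
        = ((Finset.Ico 0 (e J)).filter (fun t => extRed r t = true)).card
          + ((Finset.Ico (e J) (e (J+1))).filter (fun t => extRed r t = true)).card := by
      rw [Finset.card_filter, Finset.card_filter, Finset.card_filter,
        ← Finset.sum_Ico_consecutive (fun t => if extRed r t = true then 1 else 0) h0 h1]
    rw [Finset.sum_range_succ]
    beta_reduce at hsplit
    omega

lemma glide_total {n : ℕ} (a v : Fin n → ℕ) (r : Fin n → Bool) (h : IsGlide a v r) :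
    (∑ i, v i) = (∑ i, a i) + redCount r := by
  obtain ⟨hpos, e, he0, heln, hvan, hmono, hblocks⟩ := h
  set ℓf := (flattenW a).length with hℓf
  have hp := prefix_sum a v r e he0 hmono (fun j hj => (hblocks j hj).1) ℓf le_rfl
  have hflatsum : ∑ j ∈ Finset.range ℓf, (flattenW a).getD j 0 = ∑ i, a i := by
    rw [list_sum_getD, flattenW_sum]
  have hsum : ∑ i, v i = ∑ t ∈ Finset.range n, extVal v t := by
    rw [← Fin.sum_univ_eq_sum_range]
    exact Finset.sum_congr rfl (fun i _ => (extVal_coe v i).symm)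
  have hsplit := Finset.sum_Ico_consecutive (fun t => extVal v t) (Nat.zero_le (e ℓf)) heln
  have htail : ∑ t ∈ Finset.Ico (e ℓf) n, extVal v t = 0 :=
    Finset.sum_eq_zero (fun t ht => hvan t (Finset.mem_Ico.mp ht).1)
  have hred : redCount r = ((Finset.Ico 0 (e ℓf)).filter (fun t => extRed r t = true)).card := by
    have h1 : redCount r = ∑ i : Fin n, if r i = true then 1 else 0 := by
      rw [redCount, Finset.card_filter]
    have h2 : (∑ i : Fin n, if r i = true then 1 else 0)
        = ∑ t ∈ Finset.range n, if extRed r t = true then 1 else 0 := by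
      rw [← Fin.sum_univ_eq_sum_range]
      refine Finset.sum_congr rfl (fun i _ => by rw [extRed_coe])
    have h3 := Finset.sum_Ico_consecutive (fun t => if extRed r t = true then 1 else 0)
      (Nat.zero_le (e ℓf)) heln
    have h4 : (∑ t ∈ Finset.Ico (e ℓf) n, if extRed r t = true then 1 else 0) = 0 := by
      refine Finset.sum_eq_zero (fun t ht => ?_)
      have ht' := Finset.mem_Ico.mp ht
      have hv0 : extVal v t = 0 := hvan t ht'.1
      have hrf : extRed r t = false := by
        unfold extRed
        split
        · rename_i htn
          by_contra hcon
          have hrt : r ⟨t, htn⟩ = true := by simpa using hcon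
          have := hpos _ hrt
          rw [extVal] at hv0
          rw [dif_pos htn] at hv0
          omega
        · rfl
      simp [hrf]
    beta_reduce at h3
    rw [Finset.range_eq_Ico] at h2
    rw [h1, h2, ← h3, h4, Finset.card_filter]
    omega
  rw [Finset.range_eq_Ico] at hsum
  beta_reduce at hsplit
  omega

lemma coeff_glidePoly (c : ℤ) {n : ℕ} (a α : Fin n → ℕ) :
    MvPolynomial.coeff (Finsupp.equivFunOnFinite.symm α) (glidePoly c a)
      = ∑ p : (Fin n → Fin ((∑ i, a i) + n + 1)) × (Fin n → Bool),
          if IsGlide a (fun i => (p.1 i : ℕ)) p.2 ∧ (fun i => ((p.1 i : ℕ))) = α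
          then c ^ redCount p.2 else 0 := by
  rw [glidePoly, MvPolynomial.coeff_sum]
  refine Finset.sum_congr rfl (fun p _ => ?_)
  by_cases h2 : (fun i => ((p.1 i : ℕ))) = α
  · subst h2
    by_cases h1 : IsGlide a (fun i => (p.1 i : ℕ)) p.2
    · rw [if_pos h1, if_pos ⟨h1, rfl⟩, MvPolynomial.coeff_monomial, if_pos rfl]
    · rw [if_neg h1, if_neg (fun hc => h1 hc.1), MvPolynomial.coeff_zero]
  · by_cases h1 : IsGlide a (fun i => (p.1 i : ℕ)) p.2
    · rw [if_pos h1, MvPolynomial.coeff_monomial,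
        if_neg (fun hc => h2 (Finsupp.equivFunOnFinite.symm.injective hc)),
        if_neg (fun hc => h2 hc.2)]
    · rw [if_neg h1, MvPolynomial.coeff_zero, if_neg (fun hc => h1 hc.1)]

/-- If a weak composition `a` of length `n` is not quasiflat
(its nonzero entries do not occupy a set of consecutive positions), then for every
value of `β` the glide polynomial `𝒢_a^{(β)}` is not quasisymmetric in
`x_1, …, x_n`. -/
theorem not_quasiflat_not_quasisymmetric (n : ℕ) (a : Fin n → ℕ)
    (ha : ¬ Quasiflat a) :
    ∀ c : ℤ, ¬ IsQuasiSym (glidePoly c a) := by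
  intro c hQS
  rw [Quasiflat] at ha
  push_neg at ha
  obtain ⟨i, j, k, hij, hjk, hai, hak, haj⟩ := ha
  classical
  set L : List (Fin n) := (List.finRange n).filter (fun x => a x ≠ 0) with hLdef
  set ℓ : ℕ := L.length with hℓdef
  have hmemL : ∀ x : Fin n, x ∈ L ↔ a x ≠ 0 := by
    intro x; simp [hLdef, List.mem_filter]
  have hsortE : ∀ (s t : ℕ) (hs : s < ℓ) (ht : t < ℓ), s < t → L[s] < L[t] := by
    have hp : L.Pairwise (· < ·) := (List.pairwise_lt_finRange n).filter _
    intro s t hs ht hst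
    exact List.pairwise_iff_getElem.mp hp s t hs ht hst
  set Lg : ℕ → Fin n := fun t => L.getD t i with hLgdef
  have hLg : ∀ t, ∀ ht : t < ℓ, Lg t = L[t] := fun t ht => List.getD_eq_getElem L i ht
  have hsort : ∀ s t, s < t → t < ℓ → Lg s < Lg t := by
    intro s t hst ht
    rw [hLg s (hst.trans ht), hLg t ht]; exact hsortE s t _ ht hst
  have hmono : ∀ s t, s ≤ t → t < ℓ → Lg s ≤ Lg t := by
    intro s t hst ht
    rcases eq_or_lt_of_le hst with rfl | h
    · exact le_refl _
    · exact le_of_lt (hsort s t h ht)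
  have hval : ∀ q, q < ℓ → a (Lg q) ≠ 0 := by
    intro q hq
    rw [hLg q hq]
    exact (hmemL _).mp (List.getElem_mem _)
  have hidx : ∀ x : Fin n, a x ≠ 0 → ∃ q, q < ℓ ∧ Lg q = x := by
    intro x hx
    obtain ⟨q, hq, hqx⟩ := List.mem_iff_getElem.mp ((hmemL x).mpr hx)
    exact ⟨q, hq, by rw [hLg q hq]; exact hqx⟩
  have hLinj : ∀ s t, s < ℓ → t < ℓ → Lg s = Lg t → s = t := by
    intro s t hs ht he
    rcases lt_trichotomy s t with h | h | h
    · exact absurd he (ne_of_lt (hsort s t h ht))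
    · exact h
    · exact absurd he.symm (ne_of_lt (hsort t s h hs))
  have hflat : flattenW a = L.map a := flattenW_eq a
  have hlen : (flattenW a).length = ℓ := by rw [hflat, List.length_map]
  have hflatget : ∀ q, q < ℓ → (flattenW a).getD q 0 = a (Lg q) := by
    intro q hq
    rw [hflat, hLg q hq,
      List.getD_eq_getElem _ _ (by rw [List.length_map]; exact hq), List.getElem_map]
  have hnzget : ∀ q, q < ℓ → (nzPos a).getD q 0 = (Lg q : ℕ) := by
    intro q hq
    rw [nzPos, hLg q hq]
    rw [List.getD_eq_getElem _ _ (by rw [List.length_map]; exact hq), List.getElem_map]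
  have hgapz : ∀ (x y : ℕ), (∀ q, q < ℓ → ¬(x ≤ (Lg q : ℕ) ∧ (Lg q : ℕ) < y)) →
      ∀ t, x ≤ t → t < y → extVal a t = 0 := by
    intro x y hq t hxt hty
    unfold extVal
    split
    · rename_i htn
      by_contra hcon
      obtain ⟨q, hqℓ, hqe⟩ := hidx ⟨t, htn⟩ hcon
      refine hq q hqℓ ⟨?_, ?_⟩
      · rw [hqe]; exact hxt
      · rw [hqe]; exact hty
    · rfl
  have hsingle : ∀ (v : Fin n → ℕ) (x p : ℕ) (hp : p < n), x ≤ p →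
      (∀ t, x ≤ t → t < p → extVal v t = 0) →
      ∑ t ∈ Finset.Ico x (p+1), extVal v t = v ⟨p, hp⟩ := by
    intro v x p hp hxp hz
    rw [Finset.sum_Ico_succ_top hxp,
      Finset.sum_eq_zero (fun t ht => hz t (Finset.mem_Ico.mp ht).1 (Finset.mem_Ico.mp ht).2),
      zero_add]
    unfold extVal; rw [dif_pos hp]
  have hℓpos : 0 < ℓ := by
    obtain ⟨q, hq, _⟩ := hidx i hai; omega
  have hextRedF : ∀ t, extRed (fun _ : Fin n => false) t = false := by
    intro t; unfold extRed; split <;> rfl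
  -- the weak composition `a` is a glide of itself, with black coloring
  have hglide_a : IsGlide a a (fun _ => false) := by
    refine ⟨fun x hx => by simp at hx,
      fun m => if m = 0 then 0 else (Lg (m-1) : ℕ) + 1, if_pos rfl, ?_, ?_, ?_, ?_⟩
    · beta_reduce
      rw [hlen, if_neg (by omega)]
      exact (Lg (ℓ-1)).isLt
    · rw [hlen]
      intro t ht
      beta_reduce at ht
      rw [if_neg (by omega)] at ht
      refine hgapz ((Lg (ℓ-1) : ℕ) + 1) (t+1) ?_ t ht (by omega)
      intro q hq hcon
      have := hmono q (ℓ-1) (by omega) (by omega)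
      rw [Fin.le_def] at this
      omega
    · rw [hlen]
      intro q hq
      beta_reduce
      rcases Nat.eq_zero_or_pos q with rfl | hq0
      · rw [if_pos rfl, if_neg (by omega)]; omega
      · rw [if_neg (by omega), if_neg (by omega)]
        have h1 := hsort (q-1) q (by omega) hq
        rw [Fin.lt_def] at h1
        have h2 : q + 1 - 1 = q := by omega
        rw [h2]
        omega
    · intro q hq'
      beta_reduce
      have hq : q < ℓ := by rw [hlen] at hq'; exact hq'
      have heq1 : (if q + 1 = 0 then 0 else (Lg (q+1-1) : ℕ) + 1) = (Lg q : ℕ) + 1 := by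
        rw [if_neg (by omega)]
        simp
      refine ⟨?_, ?_, hextRedF _⟩
      · have hcard0 : ((Finset.Ico (if q = 0 then 0 else (Lg (q-1) : ℕ) + 1)
            (if q + 1 = 0 then 0 else (Lg (q+1-1) : ℕ) + 1)).filter
            (fun t => extRed (fun _ : Fin n => false) t = true)).card = 0 := by
          rw [Finset.card_eq_zero, Finset.filter_eq_empty_iff]
          intro t _
          rw [hextRedF]
          simp
        rw [hcard0, Nat.add_zero, hflatget q hq, heq1]
        rcases Nat.eq_zero_or_pos q with rfl | hq0
        · rw [if_pos rfl]
          refine hsingle a 0 (Lg 0) (Lg 0).isLt (Nat.zero_le _) ?_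
          refine hgapz 0 (Lg 0 : ℕ) ?_
          intro q' hq' hcon
          have := hmono 0 q' (by omega) hq'
          rw [Fin.le_def] at this
          omega
        · rw [if_neg (by omega)]
          have hlt := hsort (q-1) q (by omega) hq
          rw [Fin.lt_def] at hlt
          refine hsingle a ((Lg (q-1) : ℕ) + 1) (Lg q) (Lg q).isLt (by omega) ?_
          refine hgapz ((Lg (q-1) : ℕ) + 1) (Lg q : ℕ) ?_
          intro q' hq' hcon
          rcases le_or_gt q' (q-1) with hle | hgt
          · have := hmono q' (q-1) hle (by omega)
            rw [Fin.le_def] at this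
            omega
          · have := hmono q q' (by omega) hq'
            rw [Fin.le_def] at this
            omega
      · rw [heq1, hnzget q hq]
  -- uniqueness of the coloring for the glide with values `a`
  have huniq : ∀ r : Fin n → Bool, IsGlide a a r → r = fun _ => false := by
    intro r hr
    have htot := glide_total a a r hr
    have hred0 : redCount r = 0 := by omega
    rw [redCount, Finset.card_eq_zero] at hred0
    funext x
    by_contra hx
    have hxt : r x = true := by revert hx; cases r x <;> simp
    have hmem : x ∈ (Finset.univ.filter (fun i => r i = true)) :=
      Finset.mem_filter.mpr ⟨Finset.mem_univ _, hxt⟩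
    rw [hred0] at hmem
    exact absurd hmem (Finset.notMem_empty x)
  have hbound : ∀ x : Fin n, a x < (∑ i, a i) + n + 1 := by
    intro x
    have : a x ≤ ∑ i, a i :=
      Finset.single_le_sum (fun i _ => Nat.zero_le (a i)) (Finset.mem_univ x)
    omega
  -- coefficient of x^a is 1
  have hcoeffa : MvPolynomial.coeff (Finsupp.equivFunOnFinite.symm a) (glidePoly c a) = 1 := by
    rw [coeff_glidePoly]
    set p₀ : (Fin n → Fin ((∑ i, a i) + n + 1)) × (Fin n → Bool) :=
      (fun x => ⟨a x, hbound x⟩, fun _ => false) with hp₀def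
    have hterm : ∀ p : (Fin n → Fin ((∑ i, a i) + n + 1)) × (Fin n → Bool),
        (if IsGlide a (fun x => (p.1 x : ℕ)) p.2 ∧ (fun x => ((p.1 x : ℕ))) = a
          then c ^ redCount p.2 else 0) = if p = p₀ then 1 else 0 := by
      intro p
      by_cases hp : p = p₀
      · subst hp
        rw [if_pos rfl, if_pos ⟨hglide_a, rfl⟩]
        have : redCount (p₀.2) = 0 := by
          rw [redCount, Finset.card_eq_zero, Finset.filter_eq_empty_iff]
          intro x _
          simp [hp₀def]
        rw [this, pow_zero]
      · rw [if_neg hp, if_neg]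
        rintro ⟨hg, hv⟩
        apply hp
        have h1 : p.1 = p₀.1 := by
          funext x
          apply Fin.ext
          exact congrFun hv x
        have h2 : p.2 = p₀.2 := huniq p.2 (by rwa [hv] at hg)
        exact Prod.ext h1 h2
    rw [Finset.sum_congr rfl (fun p _ => hterm p),
      Finset.sum_ite_eq' Finset.univ p₀ (fun _ => (1:ℤ)), if_pos (Finset.mem_univ _)]
  -- set up the displaced positions
  have hin : (i:ℕ) < (j:ℕ) := by
    have hne : i ≠ j := fun h => hai (by rw [h]; exact haj)
    have h1 := Fin.le_def.mp hij
    have h2 : (i:ℕ) ≠ (j:ℕ) := fun h => hne (Fin.ext h)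
    omega
  set T : Finset ℕ := (Finset.range ℓ).filter (fun t => (Lg t : ℕ) < (j:ℕ)) with hTdef
  have hTne : T.Nonempty := by
    obtain ⟨q, hq, hqe⟩ := hidx i hai
    exact ⟨q, Finset.mem_filter.mpr ⟨Finset.mem_range.mpr hq, by rw [hqe]; exact hin⟩⟩
  set J : ℕ := T.max' hTne with hJdef
  have hJmem : J ∈ T := T.max'_mem hTne
  rw [hTdef] at hJmem
  rw [Finset.mem_filter, Finset.mem_range] at hJmem
  obtain ⟨hJℓ, hJj⟩ := hJmem
  have hJmax : ∀ t, t < ℓ → (Lg t : ℕ) < (j:ℕ) → t ≤ J :=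
    fun t ht hlt => T.le_max' t (Finset.mem_filter.mpr ⟨Finset.mem_range.mpr ht, hlt⟩)
  set P : Fin n := Lg J with hPdef
  have hPj : (P:ℕ) < (j:ℕ) := hJj
  have hQn : (P:ℕ) + 1 < n := by have := j.isLt; omega
  set Q : Fin n := ⟨(P:ℕ)+1, hQn⟩ with hQdef
  have hQval : (Q : ℕ) = (P:ℕ) + 1 := rfl
  have haP : a P ≠ 0 := hval J hJℓ
  have haQ : a Q = 0 := by
    by_contra hQ0
    obtain ⟨q, hq, hqe⟩ := hidx Q hQ0
    have hqJ : ¬ q ≤ J := by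
      intro hle
      have hle2 := hmono q J hle hJℓ
      rw [hqe] at hle2
      have := Fin.le_def.mp hle2
      rw [hQval] at this
      omega
    have hge : (j:ℕ) ≤ (Lg q : ℕ) := by
      by_contra hcon
      exact hqJ (hJmax q hq (by omega))
    rw [hqe, hQval] at hge
    have hQj : Q = j := Fin.ext (by rw [hQval]; omega)
    rw [hQj] at hQ0
    exact hQ0 haj
  have hright : ∀ q, J < q → q < ℓ → (Q:ℕ) < (Lg q : ℕ) := by
    intro q hJq hq
    have h1 : (j:ℕ) ≤ (Lg q:ℕ) := by
      by_contra hcon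
      have := hJmax q hq (by omega)
      omega
    have h2 : (Lg q : ℕ) ≠ (j:ℕ) := by
      intro hcon
      exact hval q hq (by rw [Fin.ext hcon]; exact haj)
    rw [hQval]
    omega
  have hPQ : P ≠ Q := by
    intro hcon
    have := congrArg Fin.val hcon
    rw [hQval] at this
    omega
  set b : Fin n → ℕ := fun x => if x = P then 0 else if x = Q then a P else a x with hbdef
  have hbP : b P = 0 := if_pos rfl
  have hbQ : b Q = a P := by
    rw [hbdef]
    beta_reduce
    rw [if_neg (Ne.symm hPQ), if_pos rfl]
  have hbx : ∀ x, x ≠ P → x ≠ Q → b x = a x := by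
    intro x h1 h2
    rw [hbdef]
    beta_reduce
    rw [if_neg h1, if_neg h2]
  -- b is not a glide of a
  have hnoglide : ∀ r : Fin n → Bool, ¬ IsGlide a b r := by
    intro r hr
    obtain ⟨hpos, e, he0, heln, hvan, hmon, hblocks⟩ := hr
    have hJℓf : J < (flattenW a).length := by rw [hlen]; exact hJℓ
    have hp := prefix_sum a b r e he0 hmon (fun q hq => (hblocks q hq).1) (J+1)
      (by rw [hlen]; omega)
    have hle1 : e (J+1) ≤ (P:ℕ) + 1 := by
      have h := (hblocks J hJℓf).2.1
      rw [hnzget J hJℓ] at h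
      exact h
    have hmono_sum : ∑ t ∈ Finset.Ico 0 (e (J+1)), extVal b t
        ≤ ∑ t ∈ Finset.Ico 0 ((P:ℕ)+1), extVal b t :=
      Finset.sum_le_sum_of_subset (Finset.Ico_subset_Ico le_rfl hle1)
    have hsum_b : ∑ t ∈ Finset.Ico 0 ((P:ℕ)+1), extVal b t + a P
        = ∑ t ∈ Finset.Ico 0 ((P:ℕ)+1), extVal a t := by
      rw [Finset.sum_Ico_succ_top (Nat.zero_le _), Finset.sum_Ico_succ_top (Nat.zero_le _)]
      have hbPe : extVal b (P:ℕ) = 0 := by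
        rw [show extVal b (P:ℕ) = b P from by rw [← extVal_coe b P], hbP]
      have haPe : extVal a (P:ℕ) = a P := by
        rw [show extVal a (P:ℕ) = a P from by rw [← extVal_coe a P]]
      rw [hbPe, haPe, add_zero]
      congr 1
      refine Finset.sum_congr rfl (fun t ht => ?_)
      have ht' := Finset.mem_Ico.mp ht
      have htn : t < n := by have := P.isLt; omega
      have h1 : (⟨t, htn⟩ : Fin n) ≠ P := by
        intro hcon
        have := congrArg Fin.val hcon
        simp at this
        omega
      have h2 : (⟨t, htn⟩ : Fin n) ≠ Q := by
        intro hcon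
        have := congrArg Fin.val hcon
        rw [hQval] at this
        simp at this
        omega
      unfold extVal
      rw [dif_pos htn, dif_pos htn, hbx _ h1 h2]
    have hF3 : ∀ M, M < ℓ → ∑ q ∈ Finset.range (M+1), a (Lg q)
        = ∑ t ∈ Finset.Ico 0 ((Lg M : ℕ)+1), extVal a t := by
      intro M
      induction M with
      | zero =>
        intro h0
        rw [Finset.sum_range_one]
        refine (hsingle a 0 (Lg 0) (Lg 0).isLt (Nat.zero_le _) ?_).symm
        refine hgapz 0 (Lg 0 : ℕ) ?_
        intro q' hq' hcon
        have := hmono 0 q' (by omega) hq'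
        rw [Fin.le_def] at this
        omega
      | succ M ih =>
        intro hM
        have hlt := hsort M (M+1) (by omega) hM
        rw [Fin.lt_def] at hlt
        have hsp : (Lg M:ℕ)+1 ≤ (Lg (M+1):ℕ)+1 := by omega
        rw [Finset.sum_range_succ, ih (by omega),
          ← Finset.sum_Ico_consecutive _ (Nat.zero_le _) hsp]
        congr 1
        refine (hsingle a ((Lg M:ℕ)+1) (Lg (M+1)) (Lg (M+1)).isLt (by omega) ?_).symm
        refine hgapz ((Lg M:ℕ)+1) (Lg (M+1) : ℕ) ?_
        intro q' hq' hcon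
        rcases le_or_gt q' M with hle | hgt
        · have := hmono q' M hle (by omega)
          rw [Fin.le_def] at this
          omega
        · have := hmono (M+1) q' (by omega) hq'
          rw [Fin.le_def] at this
          omega
    have hflatJ : ∑ q ∈ Finset.range (J+1), (flattenW a).getD q 0
        = ∑ q ∈ Finset.range (J+1), a (Lg q) := by
      refine Finset.sum_congr rfl (fun q hq => ?_)
      have := Finset.mem_range.mp hq
      exact hflatget q (by omega)
    have hkeyF := hF3 J hJℓ
    rw [← hPdef] at hkeyF
    rw [hflatJ, hkeyF] at hp
    omega
  -- coefficient of x^b is 0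
  have hcoeffb : MvPolynomial.coeff (Finsupp.equivFunOnFinite.symm b) (glidePoly c a) = 0 := by
    rw [coeff_glidePoly]
    refine Finset.sum_eq_zero (fun p _ => ?_)
    rw [if_neg]
    rintro ⟨hg, hv⟩
    rw [hv] at hg
    exact hnoglide p.2 hg
  -- apply quasisymmetry
  have hgmono : StrictMono (fun t : Fin ℓ => Lg (t:ℕ)) := by
    intro s t hst
    exact hsort (s:ℕ) (t:ℕ) hst t.isLt
  have hhmono : StrictMono (fun t : Fin ℓ => if (t:ℕ) = J then Q else Lg (t:ℕ)) := by
    intro s t hst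
    have hst' : (s:ℕ) < (t:ℕ) := hst
    beta_reduce
    by_cases hsJ : (s:ℕ) = J
    · rw [if_pos hsJ, if_neg (by omega)]
      exact Fin.lt_def.mpr (hright (t:ℕ) (by omega) t.isLt)
    · rw [if_neg hsJ]
      by_cases htJ : (t:ℕ) = J
      · rw [if_pos htJ]
        have h1 := hsort (s:ℕ) J (by omega) hJℓ
        rw [Fin.lt_def] at h1
        rw [Fin.lt_def, hQval]
        rw [← hPdef] at h1
        omega
      · rw [if_neg htJ]
        exact hsort (s:ℕ) (t:ℕ) hst' t.isLt
  have hEpos : ∀ t : Fin ℓ, 0 < a (Lg (t:ℕ)) :=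
    fun t => Nat.pos_of_ne_zero (hval (t:ℕ) t.isLt)
  have hkey := hQS ℓ (fun t : Fin ℓ => a (Lg (t:ℕ))) hEpos
    (fun t : Fin ℓ => Lg (t:ℕ)) (fun t : Fin ℓ => if (t:ℕ) = J then Q else Lg (t:ℕ))
    hgmono hhmono
  beta_reduce at hkey
  have hga : (fun x : Fin n => ∑ t : Fin ℓ, if Lg (t:ℕ) = x then a (Lg (t:ℕ)) else 0) = a := by
    funext x
    by_cases hx : a x = 0
    · rw [hx]
      refine Finset.sum_eq_zero (fun t _ => ?_)
      by_cases he : Lg (t:ℕ) = x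
      · rw [if_pos he, he, hx]
      · rw [if_neg he]
    · obtain ⟨q, hq, hqe⟩ := hidx x hx
      rw [Finset.sum_eq_single (⟨q, hq⟩ : Fin ℓ)]
      · rw [if_pos hqe, hqe]
      · intro t _ htne
        rw [if_neg]
        intro he
        exact htne (Fin.ext (hLinj (t:ℕ) q t.isLt hq (he.trans hqe.symm)))
      · intro habs; exact absurd (Finset.mem_univ _) habs
  have hgb : (fun x : Fin n => ∑ t : Fin ℓ,
      if (if (t:ℕ) = J then Q else Lg (t:ℕ)) = x then a (Lg (t:ℕ)) else 0) = b := by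
    funext x
    rcases eq_or_ne x Q with rfl | hxQ
    · rw [hbQ]
      rw [Finset.sum_eq_single (⟨J, hJℓ⟩ : Fin ℓ)]
      · rw [if_pos (by rw [if_pos rfl])]
      · intro t _ htne
        by_cases htJ : (t:ℕ) = J
        · exact absurd (Fin.ext htJ) htne
        · rw [if_neg]
          rw [if_neg htJ]
          intro he
          exact hval (t:ℕ) t.isLt (by rw [he]; exact haQ)
      · intro habs; exact absurd (Finset.mem_univ _) habs
    · rcases eq_or_ne x P with rfl | hxP
      · rw [hbP]
        refine Finset.sum_eq_zero (fun t _ => ?_)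
        by_cases htJ : (t:ℕ) = J
        · rw [if_neg]
          rw [if_pos htJ]
          exact Ne.symm hPQ
        · rw [if_neg]
          rw [if_neg htJ]
          intro he
          have := hLinj (t:ℕ) J t.isLt hJℓ (by rw [he, hPdef])
          exact htJ this
      · rw [hbx x hxP hxQ]
        by_cases hx : a x = 0
        · rw [hx]
          refine Finset.sum_eq_zero (fun t _ => ?_)
          by_cases htJ : (t:ℕ) = J
          · rw [if_neg (by rw [if_pos htJ]; exact Ne.symm hxQ)]
          · by_cases he : Lg (t:ℕ) = x
            · rw [if_pos (by rw [if_neg htJ]; exact he), he, hx]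
            · rw [if_neg (by rw [if_neg htJ]; exact he)]
        · obtain ⟨q, hq, hqe⟩ := hidx x hx
          have hqJ : q ≠ J := by
            intro hcon
            apply hxP
            rw [← hqe, hcon, hPdef]
          rw [Finset.sum_eq_single (⟨q, hq⟩ : Fin ℓ)]
          · rw [if_pos (by rw [if_neg hqJ]; exact hqe), hqe]
          · intro t _ htne
            by_cases htJ : (t:ℕ) = J
            · rw [if_neg (by rw [if_pos htJ]; exact Ne.symm hxQ)]
            · rw [if_neg]
              rw [if_neg htJ]
              intro he
              exact htne (Fin.ext (hLinj (t:ℕ) q t.isLt hq (he.trans hqe.symm)))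
          · intro habs; exact absurd (Finset.mem_univ _) habs
  rw [hga, hgb, hcoeffa, hcoeffb] at hkey
  exact one_ne_zero hkey

end GlidePaper
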